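/- Assume X₀ is ℱ₀-measurable, X₀ is integrable, and Σ_{n=1}^{∞} n^{−3/2} ‖E(S_n | ℱ₀)‖_∞ < ∞. Then, as m → ∞, m^{−1/2} ‖E(S_m | ℱ₀)‖_∞ → 0 and m^{−1/2} Σ_{j=1}^{∞} j^{−3/2} ‖E(S_{mj} | ℱ₀)‖_∞ → 0. -/

import Mathlib

open MeasureTheory Filter Finset
open scoped ENNReal Topology

lemma stmt17_rpow_cancel {x : ℝ≥0∞} (hx0 : x ≠ 0) (hxt : x ≠ ⊤) :
    x ^ (-(3:ℝ)/2) * x ^ ((3:ℝ)/2) = 1 := by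
  rw [← ENNReal.rpow_add _ _ hx0 hxt]
  norm_num

lemma stmt17_two_rpow_ne_top : ((2:ℝ≥0∞)) ^ ((3:ℝ)/2) ≠ ⊤ :=
  ENNReal.rpow_ne_top_of_nonneg (by norm_num) (by simp)

lemma stmt17_tendsto_rpow_neg32 :
    Tendsto (fun m : ℕ => (m:ℝ≥0∞) ^ (-(3:ℝ)/2)) atTop (𝓝 0) := by
  apply tendsto_of_tendsto_of_tendsto_of_le_of_le' tendsto_const_nhds
    ENNReal.tendsto_inv_nat_nhds_zero
    (Eventually.of_forall fun m => zero_le)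
  filter_upwards [eventually_ge_atTop 1] with m hm
  have h1 : (1:ℝ≥0∞) ≤ (m:ℝ≥0∞) := by exact_mod_cast hm
  calc (m:ℝ≥0∞) ^ (-(3:ℝ)/2) ≤ (m:ℝ≥0∞) ^ (-1:ℝ) :=
        ENNReal.rpow_le_rpow_of_exponent_le h1 (by norm_num)
    _ = (m:ℝ≥0∞)⁻¹ := ENNReal.rpow_neg_one _

theorem stmt17_analysis (a : ℕ → ℝ≥0∞) (ha0 : a 0 = 0)
    (hsub : ∀ m n : ℕ, m ≤ n → a m ≤ a n + a (n - m))
    (hsum : ∑' k : ℕ, ((k : ℝ≥0∞) + 1) ^ (-(3:ℝ)/2) * a (k+1) < ⊤) :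
    Tendsto (fun m : ℕ => (m:ℝ≥0∞) ^ (-(1:ℝ)/2) * a m) atTop (𝓝 0) ∧
    Tendsto (fun m : ℕ => (m:ℝ≥0∞) ^ (-(1:ℝ)/2) *
        ∑' j : ℕ, ((j:ℝ≥0∞)+1) ^ (-(3:ℝ)/2) * a (m*(j+1))) atTop (𝓝 0) := by
  set b : ℕ → ℝ≥0∞ := fun k => ((k : ℝ≥0∞) + 1) ^ (-(3:ℝ)/2) * a (k+1) with hb_def
  have hb_sum : ∑' k, b k ≠ ⊤ := hsum.ne
  have hcast0 : ∀ k : ℕ, ((k:ℝ≥0∞)+1) ≠ 0 := fun k =>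
    (zero_lt_one.trans_le le_add_self).ne'
  have hcastt : ∀ k : ℕ, ((k:ℝ≥0∞)+1) ≠ ⊤ := fun k => by
    simp [ENNReal.add_ne_top]
  have hab : ∀ k : ℕ, a (k+1) = ((k:ℝ≥0∞)+1) ^ ((3:ℝ)/2) * b k := by
    intro k
    rw [hb_def, ← mul_assoc, ← ENNReal.rpow_add _ _ (hcast0 k) (hcastt k)]
    norm_num
  have hb_fin : ∀ k, b k ≠ ⊤ := fun k =>
    (lt_of_le_of_lt (ENNReal.le_tsum k) hsum).ne
  have ha_fin : ∀ k, a k ≠ ⊤ := by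
    intro k
    cases k with
    | zero => simp [ha0]
    | succ k =>
      rw [hab k]
      exact ENNReal.mul_ne_top
        (ENNReal.rpow_ne_top_of_nonneg (by norm_num) (hcastt k)) (hb_fin k)
  set H : ℕ → ℝ≥0∞ := fun m => ∑ k ∈ range m, a k with hH_def
  have hH_fin : ∀ m, H m ≠ ⊤ := by
    intro m
    rw [hH_def]
    exact (ENNReal.sum_lt_top.mpr fun k _ => lt_top_iff_ne_top.mpr (ha_fin k)).ne
  set E : ℕ → ℝ≥0∞ := fun N => ∑' k, b (N + k) with hE_def
  have hE0 : Tendsto E atTop (𝓝 0) := by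
    have h := ENNReal.tendsto_sum_nat_add b hb_sum
    have : E = fun i => ∑' k, b (k + i) := by
      funext i; rw [hE_def]; exact tsum_congr fun k => by rw [add_comm]
    rw [this]; exact h
  -- key pointwise estimate
  have key : ∀ m L : ℕ, 1 ≤ m → m ≤ L →
      ((L:ℝ≥0∞)) ^ (-(3:ℝ)/2) * ((m:ℝ≥0∞) * a L) ≤
        (2:ℝ≥0∞) ^ ((3:ℝ)/2) * (∑ n ∈ range m, b (L - 1 + n)) +
          ((L:ℝ≥0∞)) ^ (-(3:ℝ)/2) * H m := by
    intro m L hm hmL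
    have hL1 : 1 ≤ L := hm.trans hmL
    have hL0 : ((L:ℝ≥0∞)) ≠ 0 := Nat.cast_ne_zero.mpr (by omega)
    have hLt : ((L:ℝ≥0∞)) ≠ ⊤ := by simp
    have h1 : (m:ℝ≥0∞) * a L ≤ (∑ n ∈ range m, a (L + n)) + H m := by
      have hstep : ∀ n ∈ range m, a L ≤ a (L+n) + a n := by
        intro n _
        have h := hsub L (L+n) (Nat.le_add_right _ _)
        simpa using h
      calc (m:ℝ≥0∞) * a L = ∑ _n ∈ range m, a L := by
            simp [Finset.sum_const, nsmul_eq_mul]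
        _ ≤ ∑ n ∈ range m, (a (L+n) + a n) := Finset.sum_le_sum hstep
        _ = (∑ n ∈ range m, a (L+n)) + H m := by
            rw [Finset.sum_add_distrib]
    have h2 : ∑ n ∈ range m, a (L + n) ≤
        (2:ℝ≥0∞) ^ ((3:ℝ)/2) * ((L:ℝ≥0∞)) ^ ((3:ℝ)/2) * ∑ n ∈ range m, b (L - 1 + n) := by
      rw [Finset.mul_sum]
      refine Finset.sum_le_sum ?_
      intro n hn
      have hn' : n < m := Finset.mem_range.mp hn
      have hLn : L + n = (L - 1 + n) + 1 := by omega
      rw [hLn, hab]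
      have hcast : ((L - 1 + n : ℕ):ℝ≥0∞) + 1 = ((L + n : ℕ) : ℝ≥0∞) := by
        norm_cast
        omega
      rw [hcast]
      gcongr ?_ * _
      have hle : ((L + n : ℕ) : ℝ≥0∞) ≤ ((2 * L : ℕ) : ℝ≥0∞) :=
        Nat.cast_le.mpr (by omega)
      calc ((L + n : ℕ) : ℝ≥0∞) ^ ((3:ℝ)/2) ≤ ((2 * L : ℕ) : ℝ≥0∞) ^ ((3:ℝ)/2) :=
            ENNReal.rpow_le_rpow hle (by norm_num)
        _ = (2:ℝ≥0∞) ^ ((3:ℝ)/2) * ((L:ℝ≥0∞)) ^ ((3:ℝ)/2) := by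
            rw [Nat.cast_mul, Nat.cast_ofNat,
              ENNReal.mul_rpow_of_nonneg _ _ (by norm_num)]
    calc ((L:ℝ≥0∞)) ^ (-(3:ℝ)/2) * ((m:ℝ≥0∞) * a L)
        ≤ ((L:ℝ≥0∞)) ^ (-(3:ℝ)/2) * ((∑ n ∈ range m, a (L + n)) + H m) := by gcongr
      _ ≤ ((L:ℝ≥0∞)) ^ (-(3:ℝ)/2) *
            (((2:ℝ≥0∞) ^ ((3:ℝ)/2) * ((L:ℝ≥0∞)) ^ ((3:ℝ)/2) * ∑ n ∈ range m, b (L - 1 + n))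
              + H m) := by gcongr
      _ = (((L:ℝ≥0∞)) ^ (-(3:ℝ)/2) * ((L:ℝ≥0∞)) ^ ((3:ℝ)/2)) *
            ((2:ℝ≥0∞) ^ ((3:ℝ)/2) * ∑ n ∈ range m, b (L - 1 + n))
            + ((L:ℝ≥0∞)) ^ (-(3:ℝ)/2) * H m := by ring
      _ = (2:ℝ≥0∞) ^ ((3:ℝ)/2) * (∑ n ∈ range m, b (L - 1 + n))
            + ((L:ℝ≥0∞)) ^ (-(3:ℝ)/2) * H m := by
          rw [stmt17_rpow_cancel hL0 hLt, one_mul]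

  -- Kronecker-type step
  have hid : ∀ m : ℕ, 1 ≤ m → (m:ℝ≥0∞) ^ (-(1:ℝ)/2) = (m:ℝ≥0∞) ^ (-(3:ℝ)/2) * (m:ℝ≥0∞) := by
    intro m hm
    have hm0 : ((m:ℝ≥0∞)) ≠ 0 := Nat.cast_ne_zero.mpr (by omega)
    have hmt : ((m:ℝ≥0∞)) ≠ ⊤ := by simp
    conv_lhs => rw [show (-(1:ℝ)/2) = (-(3:ℝ)/2) + 1 by norm_num]
    rw [ENNReal.rpow_add _ _ hm0 hmt, ENNReal.rpow_one]
  have hK : Tendsto (fun m : ℕ => (m:ℝ≥0∞) ^ (-(3:ℝ)/2) * H m) atTop (𝓝 0) := by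
    rw [ENNReal.tendsto_nhds_zero]
    intro ε hε
    have hε2 : (0:ℝ≥0∞) < ε / 2 := ENNReal.half_pos hε.ne'
    obtain ⟨N, hN⟩ := (ENNReal.tendsto_nhds_zero.mp hE0 (ε/2) hε2).exists
    have hbound : ∀ m : ℕ, N + 1 ≤ m →
        (m:ℝ≥0∞) ^ (-(3:ℝ)/2) * H m ≤ (m:ℝ≥0∞) ^ (-(3:ℝ)/2) * H (N+1) + E N := by
      intro m hm
      have hm0 : ((m:ℝ≥0∞)) ≠ 0 := Nat.cast_ne_zero.mpr (by omega)
      have hmt : ((m:ℝ≥0∞)) ≠ ⊤ := by simp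
      have hsplit : H m = H (N+1) + ∑ i ∈ range (m - (N+1)), a (N+1+i) := by
        have h1 : ∑ k ∈ Finset.Ico 0 (N+1), a k + ∑ k ∈ Finset.Ico (N+1) m, a k
            = ∑ k ∈ Finset.Ico 0 m, a k :=
          Finset.sum_Ico_consecutive _ (Nat.zero_le (N+1)) hm
        have h2 : ∑ k ∈ Finset.Ico (N+1) m, a k
            = ∑ i ∈ range (m - (N+1)), a (N+1+i) := Finset.sum_Ico_eq_sum_range _ _ _
        rw [hH_def]
        simp only [← Finset.range_eq_Ico] at h1
        simp only
        rw [← h1, h2]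
      have htail : ∑ i ∈ range (m - (N+1)), a (N+1+i) ≤ (m:ℝ≥0∞) ^ ((3:ℝ)/2) * E N := by
        calc ∑ i ∈ range (m - (N+1)), a (N+1+i)
            ≤ ∑ i ∈ range (m - (N+1)), (m:ℝ≥0∞) ^ ((3:ℝ)/2) * b (N+i) := by
              refine Finset.sum_le_sum ?_
              intro i hi
              have hi' : i < m - (N+1) := Finset.mem_range.mp hi
              have hidx : N+1+i = (N+i)+1 := by omega
              rw [hidx, hab]
              gcongr ?_ * _
              have hle : ((N+i:ℕ):ℝ≥0∞) + 1 ≤ (m:ℝ≥0∞) := by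
                exact_mod_cast Nat.cast_le.mpr (show N+i+1 ≤ m by omega)
              exact ENNReal.rpow_le_rpow hle (by norm_num)
          _ = (m:ℝ≥0∞) ^ ((3:ℝ)/2) * ∑ i ∈ range (m - (N+1)), b (N+i) := by
              rw [Finset.mul_sum]
          _ ≤ (m:ℝ≥0∞) ^ ((3:ℝ)/2) * E N := by
              gcongr
              exact ENNReal.sum_le_tsum _
      calc (m:ℝ≥0∞) ^ (-(3:ℝ)/2) * H m
          = (m:ℝ≥0∞) ^ (-(3:ℝ)/2) * H (N+1)
            + (m:ℝ≥0∞) ^ (-(3:ℝ)/2) * ∑ i ∈ range (m - (N+1)), a (N+1+i) := by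
            rw [hsplit, mul_add]
        _ ≤ (m:ℝ≥0∞) ^ (-(3:ℝ)/2) * H (N+1)
            + (m:ℝ≥0∞) ^ (-(3:ℝ)/2) * ((m:ℝ≥0∞) ^ ((3:ℝ)/2) * E N) := by gcongr
        _ = (m:ℝ≥0∞) ^ (-(3:ℝ)/2) * H (N+1) + E N := by
            rw [← mul_assoc, stmt17_rpow_cancel hm0 hmt, one_mul]
    have hsmall : ∀ᶠ m : ℕ in atTop, (m:ℝ≥0∞) ^ (-(3:ℝ)/2) * H (N+1) ≤ ε/2 := by
      have h := ENNReal.Tendsto.mul_const stmt17_tendsto_rpow_neg32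
        (Or.inr (hH_fin (N+1)))
      rw [zero_mul] at h
      exact ENNReal.tendsto_nhds_zero.mp h (ε/2) hε2
    filter_upwards [hsmall, eventually_ge_atTop (N+1)] with m h1 h2
    calc (m:ℝ≥0∞) ^ (-(3:ℝ)/2) * H m ≤ (m:ℝ≥0∞) ^ (-(3:ℝ)/2) * H (N+1) + E N :=
        hbound m h2
      _ ≤ ε/2 + ε/2 := add_le_add h1 hN
      _ = ε := ENNReal.add_halves ε
  have hEshift : Tendsto (fun m : ℕ => E (m-1)) atTop (𝓝 0) :=
    hE0.comp (tendsto_sub_atTop_nat 1)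
  have hE2 : Tendsto (fun m : ℕ => (2:ℝ≥0∞) ^ ((3:ℝ)/2) * E (m-1)) atTop (𝓝 0) := by
    have h := ENNReal.Tendsto.const_mul hEshift
      (Or.inr stmt17_two_rpow_ne_top)
    rwa [mul_zero] at h
  constructor
  · -- first limit
    have hG1 : ∀ᶠ m : ℕ in atTop, (m:ℝ≥0∞) ^ (-(1:ℝ)/2) * a m ≤
        (2:ℝ≥0∞) ^ ((3:ℝ)/2) * E (m-1) + (m:ℝ≥0∞) ^ (-(3:ℝ)/2) * H m := by
      filter_upwards [eventually_ge_atTop 1] with m hm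
      have h := key m m hm le_rfl
      rw [hid m hm, mul_assoc]
      refine h.trans ?_
      gcongr
      exact ENNReal.sum_le_tsum _
    have hRHS : Tendsto (fun m : ℕ => (2:ℝ≥0∞) ^ ((3:ℝ)/2) * E (m-1)
        + (m:ℝ≥0∞) ^ (-(3:ℝ)/2) * H m) atTop (𝓝 0) := by
      have h := hE2.add hK
      simpa using h
    exact tendsto_of_tendsto_of_tendsto_of_le_of_le' tendsto_const_nhds hRHS
      (Eventually.of_forall fun _ => zero_le) hG1
  · -- second limit
    have hC : (∑' j : ℕ, ((j:ℝ≥0∞)+1) ^ (-(3:ℝ)/2)) ≠ ⊤ := by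
      have h1 : ∀ j : ℕ, ((j:ℝ≥0∞)+1) ^ (-(3:ℝ)/2)
          = ENNReal.ofReal (((j:ℝ)+1) ^ (-(3:ℝ)/2)) := by
        intro j
        have he : ((j:ℝ≥0∞)+1) = ENNReal.ofReal ((j:ℝ)+1) := by
          rw [ENNReal.ofReal_add (by positivity) zero_le_one, ENNReal.ofReal_natCast,
            ENNReal.ofReal_one]
        rw [he, ENNReal.ofReal_rpow_of_pos (by positivity)]
      have h2 : Summable (fun j : ℕ => ((j:ℝ)+1) ^ (-(3:ℝ)/2)) := by
        have hs := (Real.summable_nat_rpow_inv (p := (3:ℝ)/2)).mpr (by norm_num)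
        have h3 := hs.comp_injective Nat.succ_injective
        refine h3.congr fun j => ?_
        simp only [Function.comp_apply, Nat.succ_eq_add_one]
        rw [show (-(3:ℝ)/2) = -((3:ℝ)/2) by norm_num, Real.rpow_neg (by positivity)]
        push_cast
        ring_nf
      rw [tsum_congr h1, ← ENNReal.ofReal_tsum_of_nonneg (fun j => by positivity) h2]
      exact ENNReal.ofReal_ne_top
    have hG2 : ∀ᶠ m : ℕ in atTop,
        (m:ℝ≥0∞) ^ (-(1:ℝ)/2) * (∑' j : ℕ, ((j:ℝ≥0∞)+1) ^ (-(3:ℝ)/2) * a (m*(j+1))) ≤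
          (2:ℝ≥0∞) ^ ((3:ℝ)/2) * E (m-1)
            + (∑' j : ℕ, ((j:ℝ≥0∞)+1) ^ (-(3:ℝ)/2)) * ((m:ℝ≥0∞) ^ (-(3:ℝ)/2) * H m) := by
      filter_upwards [eventually_ge_atTop 1] with m hm
      have hmt : ((m:ℝ≥0∞)) ≠ ⊤ := by simp
      have hterm : ∀ j : ℕ,
          (m:ℝ≥0∞) ^ (-(1:ℝ)/2) * (((j:ℝ≥0∞)+1) ^ (-(3:ℝ)/2) * a (m*(j+1))) ≤
            (2:ℝ≥0∞) ^ ((3:ℝ)/2) * (∑ n ∈ range m, b (m*(j+1) - 1 + n))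
              + ((j:ℝ≥0∞)+1) ^ (-(3:ℝ)/2) * ((m:ℝ≥0∞) ^ (-(3:ℝ)/2) * H m) := by
        intro j
        have hmL : m ≤ m * (j+1) := Nat.le_mul_of_pos_right m (by omega)
        have hcastL : ((m * (j+1) : ℕ):ℝ≥0∞) = (m:ℝ≥0∞) * ((j:ℝ≥0∞)+1) := by
          push_cast
          ring
        have hLpow : ((m * (j+1) : ℕ):ℝ≥0∞) ^ (-(3:ℝ)/2)
            = (m:ℝ≥0∞) ^ (-(3:ℝ)/2) * ((j:ℝ≥0∞)+1) ^ (-(3:ℝ)/2) := by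
          rw [hcastL, ENNReal.mul_rpow_of_ne_top hmt (hcastt j)]
        have hkey := key m (m * (j+1)) hm hmL
        have hLHS : (m:ℝ≥0∞) ^ (-(1:ℝ)/2) * (((j:ℝ≥0∞)+1) ^ (-(3:ℝ)/2) * a (m*(j+1)))
            = ((m * (j+1) : ℕ):ℝ≥0∞) ^ (-(3:ℝ)/2) * ((m:ℝ≥0∞) * a (m*(j+1))) := by
          rw [hid m hm, hLpow]
          ring
        rw [hLHS]
        refine hkey.trans (le_of_eq ?_)
        rw [hLpow]
        ring
      calc (m:ℝ≥0∞) ^ (-(1:ℝ)/2) * (∑' j : ℕ, ((j:ℝ≥0∞)+1) ^ (-(3:ℝ)/2) * a (m*(j+1)))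
          = ∑' j : ℕ, (m:ℝ≥0∞) ^ (-(1:ℝ)/2) * (((j:ℝ≥0∞)+1) ^ (-(3:ℝ)/2) * a (m*(j+1))) :=
            (ENNReal.tsum_mul_left).symm
        _ ≤ ∑' j : ℕ, ((2:ℝ≥0∞) ^ ((3:ℝ)/2) * (∑ n ∈ range m, b (m*(j+1) - 1 + n))
              + ((j:ℝ≥0∞)+1) ^ (-(3:ℝ)/2) * ((m:ℝ≥0∞) ^ (-(3:ℝ)/2) * H m)) :=
            ENNReal.tsum_le_tsum hterm
        _ = (2:ℝ≥0∞) ^ ((3:ℝ)/2) * (∑' j : ℕ, ∑ n ∈ range m, b (m*(j+1) - 1 + n))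
              + (∑' j : ℕ, ((j:ℝ≥0∞)+1) ^ (-(3:ℝ)/2)) * ((m:ℝ≥0∞) ^ (-(3:ℝ)/2) * H m) := by
            rw [ENNReal.tsum_add, ENNReal.tsum_mul_left, ENNReal.tsum_mul_right]
        _ ≤ (2:ℝ≥0∞) ^ ((3:ℝ)/2) * E (m-1)
              + (∑' j : ℕ, ((j:ℝ≥0∞)+1) ^ (-(3:ℝ)/2)) * ((m:ℝ≥0∞) ^ (-(3:ℝ)/2) * H m) := by
            gcongr
            calc ∑' j : ℕ, ∑ n ∈ range m, b (m*(j+1) - 1 + n)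
                = ∑' j : ℕ, ∑' n : Fin m, b ((m-1) + (m*j + (n:ℕ))) := by
                  refine tsum_congr fun j => ?_
                  rw [tsum_fintype]
                  rw [Fin.sum_univ_eq_sum_range (fun n => b ((m-1) + (m*j + n))) m]
                  refine Finset.sum_congr rfl fun n hn => ?_
                  have hn' := Finset.mem_range.mp hn
                  congr 1
                  have hms : m * (j+1) = m * j + m := Nat.mul_succ m j
                  omega
              _ = ∑' p : ℕ × Fin m, b ((m-1) + (m*p.1 + (p.2:ℕ))) :=
                  (ENNReal.tsum_prod'
                    (f := fun p : ℕ × Fin m => b ((m-1) + (m*p.1 + (p.2:ℕ))))).symm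
              _ ≤ ∑' k : ℕ, b ((m-1) + k) := by
                  have hinj : Function.Injective
                      (fun p : ℕ × Fin m => m * p.1 + ((p.2:ℕ))) := by
                    rintro ⟨j1, n1⟩ ⟨j2, n2⟩ h
                    simp only at h
                    have h1 : (n1:ℕ) < m := n1.isLt
                    have h2 : (n2:ℕ) < m := n2.isLt
                    have e1 : (m * j1 + (n1:ℕ)) / m = j1 := by
                      rw [Nat.mul_add_div (by omega)]
                      simp [Nat.div_eq_of_lt h1]
                    have e2 : (m * j2 + (n2:ℕ)) / m = j2 := by
                      rw [Nat.mul_add_div (by omega)]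
                      simp [Nat.div_eq_of_lt h2]
                    have hj : j1 = j2 := by rw [← e1, ← e2, h]
                    subst hj
                    have hn : (n1:ℕ) = (n2:ℕ) := by omega
                    exact Prod.ext rfl (Fin.ext hn)
                  exact ENNReal.tsum_comp_le_tsum_of_injective hinj
                    (fun k => b ((m-1) + k))
              _ = E (m-1) := rfl
    have hRHS : Tendsto (fun m : ℕ => (2:ℝ≥0∞) ^ ((3:ℝ)/2) * E (m-1)
        + (∑' j : ℕ, ((j:ℝ≥0∞)+1) ^ (-(3:ℝ)/2)) * ((m:ℝ≥0∞) ^ (-(3:ℝ)/2) * H m))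
        atTop (𝓝 0) := by
      have h2 := ENNReal.Tendsto.const_mul hK (Or.inr hC)
      rw [mul_zero] at h2
      have h := hE2.add h2
      simpa using h
    exact tendsto_of_tendsto_of_tendsto_of_le_of_le' tendsto_const_nhds hRHS
      (Eventually.of_forall fun _ => zero_le) hG2

lemma stmt17_eLpNorm_top_condexp_le {Ω : Type*} (m : MeasurableSpace Ω)
    [m0 : MeasurableSpace Ω] (μ : Measure Ω)
    (f : Ω → ℝ) : eLpNorm (μ[f|m]) ⊤ μ ≤ eLpNorm f ⊤ μ := by
  by_cases h : eLpNorm f ⊤ μ = ⊤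
  · simp [h]
  set R := (eLpNorm f ⊤ μ).toNNReal with hR
  have hfR : ∀ᵐ x ∂μ, |f x| ≤ (R:ℝ) := by
    have h1 := ae_le_eLpNormEssSup (f := f) (μ := μ)
    filter_upwards [h1] with x hx
    have hx' : (‖f x‖₊ : ℝ≥0∞) ≤ eLpNorm f ⊤ μ := by
      rw [eLpNorm_exponent_top]; exact hx
    rw [← ENNReal.coe_toNNReal h] at hx'
    have h2 := ENNReal.coe_le_coe.mp hx'
    rw [← Real.norm_eq_abs]
    exact_mod_cast NNReal.coe_le_coe.mpr h2
  have h2 := ae_bdd_condExp_of_ae_bdd (m := m) hfR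
  have h3 : eLpNorm (μ[f|m]) ⊤ μ ≤ (R : ℝ≥0∞) := by
    rw [eLpNorm_exponent_top]
    refine eLpNormEssSup_le_of_ae_nnnorm_bound ?_
    filter_upwards [h2] with x hx
    rw [← NNReal.coe_le_coe, coe_nnnorm, Real.norm_eq_abs]
    exact hx
  calc eLpNorm (μ[f|m]) ⊤ μ ≤ (R : ℝ≥0∞) := h3
    _ = eLpNorm f ⊤ μ := ENNReal.coe_toNNReal h

lemma stmt17_condexp_comp {Ω : Type*} (F0 : MeasurableSpace Ω)
    [m0 : MeasurableSpace Ω] (μ : Measure Ω)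
    [IsProbabilityMeasure μ] (hF0m : F0 ≤ m0)
    {f : Ω → Ω} (hf : MeasurePreserving f μ μ) (hcom : MeasurableSpace.comap f F0 ≤ m0)
    {Y : Ω → ℝ} (hY : Integrable Y μ) :
    μ[Y ∘ f | MeasurableSpace.comap f F0] =ᵐ[μ] (μ[Y | F0]) ∘ f := by
  have hYf : Integrable (Y ∘ f) μ :=
    memLp_one_iff_integrable.mp
      ((memLp_one_iff_integrable.mpr hY).comp_measurePreserving hf)
  have hcezm : AEStronglyMeasurable (μ[Y|F0]) (Measure.map f μ) := by
    rw [hf.map_eq]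
    exact (stronglyMeasurable_condExp.mono hF0m).aestronglyMeasurable
  have hceint : Integrable ((μ[Y|F0]) ∘ f) μ :=
    memLp_one_iff_integrable.mp
      ((memLp_one_iff_integrable.mpr (integrable_condExp (f := Y) (m := F0))).comp_measurePreserving
        hf)
  refine (ae_eq_condExp_of_forall_setIntegral_eq hcom hYf
    (fun s _ _ => hceint.integrableOn) ?_ ?_).symm
  · intro s hs _
    obtain ⟨A, hA, rfl⟩ := MeasurableSpace.measurableSet_comap.mp hs
    have hAm : MeasurableSet[m0] A := hF0m A hA
    have e1 : ∫ x in f ⁻¹' A, (μ[Y|F0]) (f x) ∂μ = ∫ y in A, (μ[Y|F0]) y ∂μ := by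
      rw [← setIntegral_map hAm hcezm hf.measurable.aemeasurable, hf.map_eq]
    have e2 : ∫ x in f ⁻¹' A, Y (f x) ∂μ = ∫ y in A, Y y ∂μ := by
      rw [← setIntegral_map hAm (by rw [hf.map_eq]; exact hY.1) hf.measurable.aemeasurable,
        hf.map_eq]
    simp only [Function.comp_apply]
    calc ∫ x in f ⁻¹' A, (μ[Y|F0]) (f x) ∂μ = ∫ y in A, (μ[Y|F0]) y ∂μ := e1
      _ = ∫ y in A, Y y ∂μ := setIntegral_condExp hF0m hY hA
      _ = ∫ x in f ⁻¹' A, Y (f x) ∂μ := e2.symm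
  · exact (stronglyMeasurable_condExp.comp_measurable
      (Measurable.of_comap_le le_rfl)).aestronglyMeasurable

/-- Lemma `techlemma`: under `∑ n^{-3/2} ‖E(S_n|F₀)‖_∞ < ∞`, one has
`m^{-1/2} ‖E(S_m|F₀)‖_∞ → 0` and `m^{-1/2} ∑_j j^{-3/2} ‖E(S_{mj}|F₀)‖_∞ → 0`. -/
theorem stmt17_main {Ω : Type*} (F0 : MeasurableSpace Ω) [m0 : MeasurableSpace Ω]
    (μ : Measure Ω) [IsProbabilityMeasure μ]
    (T : Ω → Ω) (hT : MeasurePreserving T μ μ)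
    (hF0m : F0 ≤ m0) (hF0T : F0 ≤ MeasurableSpace.comap T F0)
    (X0 : Ω → ℝ) (hX0meas : @Measurable Ω ℝ F0 _ X0) (hX0int : Integrable X0 μ)
    (X : ℕ → Ω → ℝ) (hX : ∀ i, X i = X0 ∘ T^[i])
    (S : ℕ → Ω → ℝ) (hS : ∀ k, S k = fun ω => ∑ j ∈ Finset.Icc 1 k, X j ω)
    (hmw : ∑' k : ℕ, ((k : ℝ≥0∞) + 1) ^ (-(3 : ℝ) / 2) * eLpNorm (μ[S (k + 1)|F0]) ⊤ μ < ⊤) :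
    Tendsto (fun m : ℕ => ((m : ℝ≥0∞)) ^ (-(1 : ℝ) / 2) * eLpNorm (μ[S m|F0]) ⊤ μ)
        atTop (𝓝 0) ∧
      Tendsto (fun m : ℕ => ((m : ℝ≥0∞)) ^ (-(1 : ℝ) / 2) *
          ∑' j : ℕ, ((j : ℝ≥0∞) + 1) ^ (-(3 : ℝ) / 2) * eLpNorm (μ[S (m * (j + 1))|F0]) ⊤ μ)
        atTop (𝓝 0) := by
  have hTmeas : Measurable T := hT.measurable
  have hXint : ∀ i, Integrable (X i) μ := by
    intro i
    rw [hX i]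
    exact memLp_one_iff_integrable.mp
      ((memLp_one_iff_integrable.mpr hX0int).comp_measurePreserving (hT.iterate i))
  have hSint : ∀ k, Integrable (S k) μ := by
    intro k
    rw [hS k]
    exact integrable_finset_sum _ (fun j _ => hXint j)
  have hF0i : ∀ i : ℕ, F0 ≤ MeasurableSpace.comap T^[i] F0 := by
    intro i
    induction i with
    | zero => simp [Function.iterate_zero, MeasurableSpace.comap_id]
    | succ n ih =>
      calc F0 ≤ MeasurableSpace.comap T F0 := hF0T
        _ ≤ MeasurableSpace.comap T (MeasurableSpace.comap T^[n] F0) :=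
            MeasurableSpace.comap_mono ih
        _ = MeasurableSpace.comap (T^[n] ∘ T) F0 := MeasurableSpace.comap_comp
        _ = MeasurableSpace.comap T^[n+1] F0 := by rw [← Function.iterate_succ]
  have hFim : ∀ i : ℕ, MeasurableSpace.comap T^[i] F0 ≤ m0 := by
    intro i
    calc MeasurableSpace.comap T^[i] F0 ≤ MeasurableSpace.comap T^[i] m0 :=
        MeasurableSpace.comap_mono hF0m
      _ ≤ m0 := @Measurable.comap_le Ω Ω m0 m0 (T^[i]) (hTmeas.iterate i)
  set a : ℕ → ℝ≥0∞ := fun k => eLpNorm (μ[S k|F0]) ⊤ μ with ha_def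
  have ha0 : a 0 = 0 := by
    have hS0 : S 0 = 0 := by
      rw [hS 0]
      funext ω
      simp
    rw [ha_def]
    simp only [hS0, condExp_zero]
    simp
  have hIcc_Ioc : ∀ k : ℕ, Finset.Icc 1 k = Finset.Ioc 0 k := by
    intro k
    ext x
    simp only [Finset.mem_Icc, Finset.mem_Ioc]
    omega
  have hsub : ∀ m n : ℕ, m ≤ n → a m ≤ a n + a (n - m) := by
    intro m n hmn
    have hdec : S m = S n - (S (n - m)) ∘ T^[m] := by
      funext ω
      rw [Pi.sub_apply, Function.comp_apply, hS n, hS m, hS (n-m)]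
      simp only
      have e2 : ∑ j ∈ Finset.Ioc m n, X j ω = ∑ i ∈ Finset.Ioc 0 (n-m), X i (T^[m] ω) := by
        have hmap : (Finset.Ioc 0 (n-m)).map (addLeftEmbedding m) = Finset.Ioc m n := by
          rw [Finset.map_add_left_Ioc, add_zero, Nat.add_sub_cancel' hmn]
        rw [← hmap, Finset.sum_map]
        refine Finset.sum_congr rfl fun i _ => ?_
        simp only [addLeftEmbedding_apply]
        rw [hX (m+i), hX i, Function.comp_apply, Function.comp_apply, add_comm m i,
          Function.iterate_add_apply]
      have hsplit : ∑ j ∈ Finset.Icc 1 n, X j ω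
          = ∑ j ∈ Finset.Icc 1 m, X j ω + ∑ i ∈ Finset.Icc 1 (n-m), X i (T^[m] ω) := by
        rw [hIcc_Ioc n, hIcc_Ioc m, hIcc_Ioc (n-m), ← e2,
          Finset.sum_Ioc_consecutive _ (Nat.zero_le m) hmn]
      rw [hsplit]
      ring
    have hcomp_int : Integrable ((S (n-m)) ∘ T^[m]) μ :=
      memLp_one_iff_integrable.mp
        ((memLp_one_iff_integrable.mpr (hSint (n-m))).comp_measurePreserving (hT.iterate m))
    have hce : μ[S m|F0] =ᵐ[μ] μ[S n|F0] - μ[(S (n-m)) ∘ T^[m]|F0] := by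
      rw [hdec]
      exact condExp_sub (hSint n) hcomp_int F0
    have hb2 : eLpNorm (μ[(S (n-m)) ∘ T^[m]|F0]) ⊤ μ ≤ a (n-m) := by
      have h1 : μ[(S (n-m)) ∘ T^[m]|F0] =ᵐ[μ]
          μ[ μ[(S (n-m)) ∘ T^[m] | MeasurableSpace.comap T^[m] F0] | F0] :=
        (condExp_condExp_of_le (hF0i m) (hFim m)).symm
      have h2 := stmt17_condexp_comp F0 μ hF0m (hT.iterate m) (hFim m) (hSint (n-m))
      have h3 : μ[(S (n-m)) ∘ T^[m]|F0] =ᵐ[μ] μ[ ((μ[S (n-m)|F0]) ∘ T^[m]) | F0] :=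
        h1.trans (condExp_congr_ae h2)
      calc eLpNorm (μ[(S (n-m)) ∘ T^[m]|F0]) ⊤ μ
          = eLpNorm (μ[ ((μ[S (n-m)|F0]) ∘ T^[m]) | F0]) ⊤ μ := eLpNorm_congr_ae h3
        _ ≤ eLpNorm ((μ[S (n-m)|F0]) ∘ T^[m]) ⊤ μ := stmt17_eLpNorm_top_condexp_le F0 μ _
        _ = eLpNorm (μ[S (n-m)|F0]) ⊤ μ :=
            eLpNorm_comp_measurePreserving
              ((stronglyMeasurable_condExp.mono hF0m).aestronglyMeasurable) (hT.iterate m)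
    calc a m = eLpNorm (μ[S n|F0] - μ[(S (n-m)) ∘ T^[m]|F0]) ⊤ μ := eLpNorm_congr_ae hce
      _ ≤ eLpNorm (μ[S n|F0]) ⊤ μ + eLpNorm (μ[(S (n-m)) ∘ T^[m]|F0]) ⊤ μ :=
          eLpNorm_sub_le ((stronglyMeasurable_condExp.mono hF0m).aestronglyMeasurable)
            ((stronglyMeasurable_condExp.mono hF0m).aestronglyMeasurable) le_top
      _ ≤ a n + a (n-m) := add_le_add le_rfl hb2
  exact stmt17_analysis a ha0 hsub hmw

/-- Lemma `techlemma`: under `∑ n^{-3/2} ‖E(S_n|F₀)‖_∞ < ∞`, one has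
`m^{-1/2} ‖E(S_m|F₀)‖_∞ → 0` and `m^{-1/2} ∑_j j^{-3/2} ‖E(S_{mj}|F₀)‖_∞ → 0`. -/
theorem stmt_17 {Ω : Type*} [m0 : MeasurableSpace Ω] (μ : Measure Ω) [IsProbabilityMeasure μ]
    (T : Ω → Ω) (hTbij : Function.Bijective T) (hT : MeasurePreserving T μ μ)
    (F0 : MeasurableSpace Ω) (hF0m : F0 ≤ m0) (hF0T : F0 ≤ MeasurableSpace.comap T F0)
    (X0 : Ω → ℝ) (hX0meas : @Measurable Ω ℝ F0 _ X0) (hX0int : Integrable X0 μ)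
    (X : ℕ → Ω → ℝ) (hX : ∀ i, X i = X0 ∘ T^[i])
    (S : ℕ → Ω → ℝ) (hS : ∀ k, S k = fun ω => ∑ j ∈ Finset.Icc 1 k, X j ω)
    (hmw : ∑' k : ℕ, ((k : ℝ≥0∞) + 1) ^ (-(3 : ℝ) / 2) * eLpNorm (μ[S (k + 1)|F0]) ⊤ μ < ⊤) :
    Tendsto (fun m : ℕ => ((m : ℝ≥0∞)) ^ (-(1 : ℝ) / 2) * eLpNorm (μ[S m|F0]) ⊤ μ)
        atTop (𝓝 0) ∧
      Tendsto (fun m : ℕ => ((m : ℝ≥0∞)) ^ (-(1 : ℝ) / 2) *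
          ∑' j : ℕ, ((j : ℝ≥0∞) + 1) ^ (-(3 : ℝ) / 2) * eLpNorm (μ[S (m * (j + 1))|F0]) ⊤ μ)
        atTop (𝓝 0) :=
  @stmt17_main Ω F0 m0 μ _ T hT hF0m hF0T X0 hX0meas hX0int X hX S hS hmw
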